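/- arXiv:0904.3644 — 2 statements merged into one kernel-verified Lean document; each statement's English description precedes it below -/
import Mathlib

section
/- Let H be a Hopf algebra over a commutative ring k with antipode S, and let R ∈ H ⊗ H be a quasi-triangular structure, i.e., R is invertible, R·Δ(x) = (τ∘Δ)(x)·R for all x ∈ H, (Δ⊗id)(R) = R₁₃·R₂₃, and (id⊗Δ)(R) = R₁₃·R₁₂. Define u := μ((S ⊗ id)(τ(R))) ∈ H, i.e., u = m(S ⊗ 1)(R₂₁) where R₂₁ = τ(R) and μ : H ⊗ H → H is the multiplication map. Then u·x = S(S(x))·u for every x ∈ H; in particular, when u is invertible the square of the antipode is the inner automorphism S²(x) = u x u⁻¹. -/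
open scoped TensorProduct

variable (k H : Type*) [CommRing k] [Ring H] [HopfAlgebra k H]

/-- The algebra homomorphism `φ₁₂ : H ⊗ H → H ⊗ H ⊗ H`, `a ⊗ b ↦ a ⊗ b ⊗ 1`. -/
noncomputable def phi12 : H ⊗[k] H →ₐ[k] H ⊗[k] (H ⊗[k] H) :=
  Algebra.TensorProduct.map (AlgHom.id k H) Algebra.TensorProduct.includeLeft

/-- The algebra homomorphism `φ₁₃ : H ⊗ H → H ⊗ H ⊗ H`, `a ⊗ b ↦ a ⊗ 1 ⊗ b`. -/
noncomputable def phi13 : H ⊗[k] H →ₐ[k] H ⊗[k] (H ⊗[k] H) :=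
  Algebra.TensorProduct.map (AlgHom.id k H) Algebra.TensorProduct.includeRight

/-- The algebra homomorphism `φ₂₃ : H ⊗ H → H ⊗ H ⊗ H`, `a ⊗ b ↦ 1 ⊗ a ⊗ b`. -/
noncomputable def phi23 : H ⊗[k] H →ₐ[k] H ⊗[k] (H ⊗[k] H) :=
  Algebra.TensorProduct.includeRight

/-- The algebra homomorphism `Δ ⊗ id : H ⊗ H → H ⊗ H ⊗ H` (composed with the canonical
associativity identification). -/
noncomputable def comulTensorId : H ⊗[k] H →ₐ[k] H ⊗[k] (H ⊗[k] H) :=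
  (Algebra.TensorProduct.assoc k k k H H H).toAlgHom.comp
    (Algebra.TensorProduct.map (Bialgebra.comulAlgHom k H) (AlgHom.id k H))

/-- The algebra homomorphism `id ⊗ Δ : H ⊗ H → H ⊗ H ⊗ H`. -/
noncomputable def idTensorComul : H ⊗[k] H →ₐ[k] H ⊗[k] (H ⊗[k] H) :=
  Algebra.TensorProduct.map (AlgHom.id k H) (Bialgebra.comulAlgHom k H)

/-- The Drinfel'd element `u = m((S ⊗ id)(R₂₁)) = μ((S ⊗ id)(τ(R)))` of a
quasi-triangular Hopf algebra. -/
noncomputable def drinfeldU (R : H ⊗[k] H) : H :=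
  LinearMap.mul' k H
    ((TensorProduct.map (HopfAlgebra.antipode (R := k)) LinearMap.id)
      ((TensorProduct.comm k H H) R))


section DrinfeldAuxAll
open TensorProduct LinearMap Coalgebra Bialgebra HopfAlgebra
set_option maxHeartbeats 1000000
set_option synthInstance.maxHeartbeats 400000

section AuxConv
variable (k H : Type*) [CommRing k] [Ring H] [HopfAlgebra k H]

noncomputable def DrinfeldAux.D2 : H ⊗[k] H →ₗ[k] (H ⊗[k] H) ⊗[k] (H ⊗[k] H) :=
  (tensorTensorTensorComm k H H H H).toLinearMap ∘ₗ map Coalgebra.comul Coalgebra.comul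

namespace DrinfeldAux

@[simp] lemma D2_tmul (a b : H) :
    D2 k H (a ⊗ₜ[k] b) =
      (tensorTensorTensorComm k H H H H) (Coalgebra.comul a ⊗ₜ[k] Coalgebra.comul b) := by
  simp [D2]

noncomputable def conv (f g : H ⊗[k] H →ₗ[k] H) : H ⊗[k] H →ₗ[k] H :=
  LinearMap.mul' k H ∘ₗ map f g ∘ₗ D2 k H

noncomputable def uE : H ⊗[k] H →ₗ[k] H :=
  Algebra.linearMap k H ∘ₗ (TensorProduct.lid k k).toLinearMap ∘ₗ
    map Coalgebra.counit Coalgebra.counit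

@[simp] lemma uE_tmul (a b : H) :
    uE k H (a ⊗ₜ[k] b) = algebraMap k H (Coalgebra.counit a * Coalgebra.counit b) := by
  simp [uE, smul_eq_mul]

lemma D2_coassoc :
    (TensorProduct.assoc k (H ⊗[k] H) (H ⊗[k] H) (H ⊗[k] H)).toLinearMap ∘ₗ
        map (D2 k H) LinearMap.id ∘ₗ D2 k H =
      map LinearMap.id (D2 k H) ∘ₗ D2 k H := by
  apply TensorProduct.ext'
  intro a b
  have claim1 :
      (TensorProduct.assoc k (H ⊗[k] H) (H ⊗[k] H) (H ⊗[k] H)).toLinearMap ∘ₗ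
          map (D2 k H) LinearMap.id ∘ₗ (tensorTensorTensorComm k H H H H).toLinearMap =
        ((TensorProduct.assoc k (H ⊗[k] H) (H ⊗[k] H) (H ⊗[k] H)).toLinearMap ∘ₗ
            map (tensorTensorTensorComm k H H H H).toLinearMap LinearMap.id ∘ₗ
            (tensorTensorTensorComm k (H ⊗[k] H) H (H ⊗[k] H) H).toLinearMap) ∘ₗ
          map (map Coalgebra.comul LinearMap.id) (map Coalgebra.comul LinearMap.id) := by
    apply TensorProduct.ext_fourfold'
    intro p q r s
    simp [tensorTensorTensorComm_tmul]
  have claim2 :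
      map LinearMap.id (D2 k H) ∘ₗ (tensorTensorTensorComm k H H H H).toLinearMap =
        (map LinearMap.id (tensorTensorTensorComm k H H H H).toLinearMap ∘ₗ
            (tensorTensorTensorComm k H (H ⊗[k] H) H (H ⊗[k] H)).toLinearMap) ∘ₗ
          map (map LinearMap.id Coalgebra.comul) (map LinearMap.id Coalgebra.comul) := by
    apply TensorProduct.ext_fourfold'
    intro p q r s
    simp [tensorTensorTensorComm_tmul]
  have claim3 :
      (TensorProduct.assoc k (H ⊗[k] H) (H ⊗[k] H) (H ⊗[k] H)).toLinearMap ∘ₗ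
          map (tensorTensorTensorComm k H H H H).toLinearMap LinearMap.id ∘ₗ
          (tensorTensorTensorComm k (H ⊗[k] H) H (H ⊗[k] H) H).toLinearMap =
        (map LinearMap.id (tensorTensorTensorComm k H H H H).toLinearMap ∘ₗ
            (tensorTensorTensorComm k H (H ⊗[k] H) H (H ⊗[k] H)).toLinearMap) ∘ₗ
          map (TensorProduct.assoc k H H H).toLinearMap
            (TensorProduct.assoc k H H H).toLinearMap := by
    apply TensorProduct.ext_fourfold'
    intro y q z s
    induction y using TensorProduct.induction_on with
    | zero => simp only [zero_tmul, map_zero]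
    | tmul p1 p2 =>
      induction z using TensorProduct.induction_on with
      | zero => simp only [zero_tmul, tmul_zero, map_zero]
      | tmul r1 r2 => simp [tensorTensorTensorComm_tmul]
      | add z1 z2 hz1 hz2 =>
        simp only [add_tmul, tmul_add, map_add, hz1, hz2]
    | add y1 y2 hy1 hy2 =>
      simp only [add_tmul, tmul_add, map_add, hy1, hy2]
  have expand : ∀ (F : (H ⊗[k] H) ⊗[k] (H ⊗[k] H) →ₗ[k]
        (H ⊗[k] H) ⊗[k] ((H ⊗[k] H) ⊗[k] (H ⊗[k] H))),
      (F ∘ₗ (tensorTensorTensorComm k H H H H).toLinearMap)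
        (Coalgebra.comul a ⊗ₜ[k] Coalgebra.comul b) =
      F ((tensorTensorTensorComm k H H H H) (Coalgebra.comul a ⊗ₜ[k] Coalgebra.comul b)) := by
    intro F; rfl
  calc ((TensorProduct.assoc k (H ⊗[k] H) (H ⊗[k] H) (H ⊗[k] H)).toLinearMap ∘ₗ
        map (D2 k H) LinearMap.id ∘ₗ D2 k H) (a ⊗ₜ[k] b)
      = (((TensorProduct.assoc k (H ⊗[k] H) (H ⊗[k] H) (H ⊗[k] H)).toLinearMap ∘ₗ
          map (D2 k H) LinearMap.id ∘ₗ (tensorTensorTensorComm k H H H H).toLinearMap))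
          (Coalgebra.comul a ⊗ₜ[k] Coalgebra.comul b) := by
        simp [D2]
    _ = (((TensorProduct.assoc k (H ⊗[k] H) (H ⊗[k] H) (H ⊗[k] H)).toLinearMap ∘ₗ
          map (tensorTensorTensorComm k H H H H).toLinearMap LinearMap.id ∘ₗ
          (tensorTensorTensorComm k (H ⊗[k] H) H (H ⊗[k] H) H).toLinearMap))
          ((map Coalgebra.comul LinearMap.id) (Coalgebra.comul a) ⊗ₜ[k]
            (map Coalgebra.comul LinearMap.id) (Coalgebra.comul b)) := by
        rw [claim1]; simp
    _ = ((map LinearMap.id (tensorTensorTensorComm k H H H H).toLinearMap ∘ₗ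
          (tensorTensorTensorComm k H (H ⊗[k] H) H (H ⊗[k] H)).toLinearMap))
          (((TensorProduct.assoc k H H H).toLinearMap
              ((map Coalgebra.comul LinearMap.id) (Coalgebra.comul a))) ⊗ₜ[k]
            ((TensorProduct.assoc k H H H).toLinearMap
              ((map Coalgebra.comul LinearMap.id) (Coalgebra.comul b)))) := by
        rw [claim3]; simp
    _ = ((map LinearMap.id (tensorTensorTensorComm k H H H H).toLinearMap ∘ₗ
          (tensorTensorTensorComm k H (H ⊗[k] H) H (H ⊗[k] H)).toLinearMap))
          ((map LinearMap.id Coalgebra.comul) (Coalgebra.comul a) ⊗ₜ[k]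
            (map LinearMap.id Coalgebra.comul) (Coalgebra.comul b)) := by
        have ha := Coalgebra.coassoc_apply (R := k) a
        have hb := Coalgebra.coassoc_apply (R := k) b
        rw [show ((map Coalgebra.comul LinearMap.id) (Coalgebra.comul a)) =
            LinearMap.rTensor H Coalgebra.comul (Coalgebra.comul a) from rfl,
          show ((map Coalgebra.comul LinearMap.id) (Coalgebra.comul b)) =
            LinearMap.rTensor H Coalgebra.comul (Coalgebra.comul b) from rfl]
        rw [show ((TensorProduct.assoc k H H H).toLinearMap
            (LinearMap.rTensor H Coalgebra.comul (Coalgebra.comul a))) =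
            (TensorProduct.assoc k H H H)
            ((Coalgebra.comul (R:=k)).rTensor H (Coalgebra.comul a)) from rfl, ha]
        rw [show ((TensorProduct.assoc k H H H).toLinearMap
            (LinearMap.rTensor H Coalgebra.comul (Coalgebra.comul b))) =
            (TensorProduct.assoc k H H H)
            ((Coalgebra.comul (R:=k)).rTensor H (Coalgebra.comul b)) from rfl, hb]
        rfl
    _ = ((map LinearMap.id (D2 k H) ∘ₗ (tensorTensorTensorComm k H H H H).toLinearMap))
          (Coalgebra.comul a ⊗ₜ[k] Coalgebra.comul b) := by
        rw [claim2]; simp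
    _ = (map LinearMap.id (D2 k H) ∘ₗ D2 k H) (a ⊗ₜ[k] b) := by simp [D2]

variable {k H}

lemma conv_assoc (f g h : H ⊗[k] H →ₗ[k] H) :
    conv k H (conv k H f g) h = conv k H f (conv k H g h) := by
  have e1 : map (conv k H f g) h =
      map (LinearMap.mul' k H ∘ₗ map f g) h ∘ₗ map (D2 k H) LinearMap.id := by
    rw [← TensorProduct.map_comp, LinearMap.comp_id]
    rw [conv, LinearMap.comp_assoc]
  have e2 : map f (conv k H g h) =
      map f (LinearMap.mul' k H ∘ₗ map g h) ∘ₗ map LinearMap.id (D2 k H) := by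
    rw [← TensorProduct.map_comp, LinearMap.comp_id]
    rw [conv, LinearMap.comp_assoc]
  have e3 : LinearMap.mul' k H ∘ₗ map (LinearMap.mul' k H ∘ₗ map f g) h =
      (LinearMap.mul' k H ∘ₗ map f (LinearMap.mul' k H ∘ₗ map g h)) ∘ₗ
        (TensorProduct.assoc k (H ⊗[k] H) (H ⊗[k] H) (H ⊗[k] H)).toLinearMap := by
    apply TensorProduct.ext_threefold
    intro x y z
    simp [mul_assoc]
  rw [show conv k H (conv k H f g) h
      = LinearMap.mul' k H ∘ₗ map (conv k H f g) h ∘ₗ D2 k H from rfl,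
    show conv k H f (conv k H g h)
      = LinearMap.mul' k H ∘ₗ map f (conv k H g h) ∘ₗ D2 k H from rfl,
    e1, e2]
  simp only [LinearMap.comp_assoc]
  rw [← D2_coassoc k H]
  simp only [← LinearMap.comp_assoc]
  rw [e3]

lemma conv_tmul (f g : H ⊗[k] H →ₗ[k] H) (a b : H) :
    conv k H f g (a ⊗ₜ[k] b) =
      (LinearMap.mul' k H ∘ₗ map f g ∘ₗ (tensorTensorTensorComm k H H H H).toLinearMap)
        (Coalgebra.comul a ⊗ₜ[k] Coalgebra.comul b) := by
  simp [conv, D2]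

lemma conv_unit_left (f : H ⊗[k] H →ₗ[k] H) : conv k H (uE k H) f = f := by
  have key : LinearMap.mul' k H ∘ₗ map (uE k H) f ∘ₗ
        (tensorTensorTensorComm k H H H H).toLinearMap =
      f ∘ₗ map
        ((TensorProduct.lid k H).toLinearMap ∘ₗ LinearMap.rTensor H Coalgebra.counit)
        ((TensorProduct.lid k H).toLinearMap ∘ₗ LinearMap.rTensor H Coalgebra.counit) := by
    apply TensorProduct.ext_fourfold'
    intro p q r s
    simp only [LinearMap.comp_apply, map_tmul, tensorTensorTensorComm_tmul,
      LinearEquiv.coe_coe, LinearMap.mul'_apply, uE_tmul, LinearMap.rTensor_tmul,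
      TensorProduct.lid_tmul, LinearMap.id_coe, id_eq]
    rw [← smul_tmul', tmul_smul, map_smul, map_smul, smul_smul, Algebra.smul_def]
  apply TensorProduct.ext'
  intro a b
  rw [conv_tmul, key]
  simp [Coalgebra.rTensor_counit_comul]

lemma conv_unit_right (f : H ⊗[k] H →ₗ[k] H) : conv k H f (uE k H) = f := by
  have key : LinearMap.mul' k H ∘ₗ map f (uE k H) ∘ₗ
        (tensorTensorTensorComm k H H H H).toLinearMap =
      f ∘ₗ map
        ((TensorProduct.rid k H).toLinearMap ∘ₗ LinearMap.lTensor H Coalgebra.counit)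
        ((TensorProduct.rid k H).toLinearMap ∘ₗ LinearMap.lTensor H Coalgebra.counit) := by
    apply TensorProduct.ext_fourfold'
    intro p q r s
    simp only [LinearMap.comp_apply, map_tmul, tensorTensorTensorComm_tmul,
      LinearEquiv.coe_coe, LinearMap.mul'_apply, uE_tmul, LinearMap.lTensor_tmul,
      TensorProduct.rid_tmul, LinearMap.id_coe, id_eq]
    rw [← smul_tmul', tmul_smul, map_smul, map_smul, smul_smul, Algebra.smul_def,
      Algebra.commutes]
  apply TensorProduct.ext'
  intro a b
  rw [conv_tmul, key]
  simp [Coalgebra.lTensor_counit_comul]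


variable (k H)

/-- `F0 = S ∘ μ`. -/
noncomputable def F0 : H ⊗[k] H →ₗ[k] H :=
  HopfAlgebra.antipode (R := k) ∘ₗ LinearMap.mul' k H

/-- `G0 : a ⊗ b ↦ S b * S a`. -/
noncomputable def G0 : H ⊗[k] H →ₗ[k] H :=
  LinearMap.mul' k H ∘ₗ
    map (HopfAlgebra.antipode (R := k)) (HopfAlgebra.antipode (R := k)) ∘ₗ
    (TensorProduct.comm k H H).toLinearMap

@[simp] lemma F0_tmul (a b : H) :
    F0 k H (a ⊗ₜ[k] b) = HopfAlgebra.antipode (R := k) (a * b) := by simp [F0]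

@[simp] lemma G0_tmul (a b : H) :
    G0 k H (a ⊗ₜ[k] b) =
      HopfAlgebra.antipode (R := k) b * HopfAlgebra.antipode (R := k) a := by simp [G0]

lemma mulmul_ttc (y z : H ⊗[k] H) :
    map (LinearMap.mul' k H) (LinearMap.mul' k H)
      ((tensorTensorTensorComm k H H H H) (y ⊗ₜ[k] z)) = y * z := by
  induction y using TensorProduct.induction_on with
  | zero => simp
  | tmul p q =>
    induction z using TensorProduct.induction_on with
    | zero => simp
    | tmul r s => simp [tensorTensorTensorComm_tmul, Algebra.TensorProduct.tmul_mul_tmul]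
    | add z1 z2 h1 h2 => simp only [tmul_add, map_add, h1, h2, mul_add]
  | add y1 y2 h1 h2 => simp only [add_tmul, map_add, h1, h2, add_mul]

lemma conv_F0_mul : conv k H (F0 k H) (LinearMap.mul' k H) = uE k H := by
  apply TensorProduct.ext'
  intro a b
  rw [conv_tmul]
  have : (LinearMap.mul' k H ∘ₗ map (F0 k H) (LinearMap.mul' k H) ∘ₗ
        (tensorTensorTensorComm k H H H H).toLinearMap)
        (Coalgebra.comul a ⊗ₜ[k] Coalgebra.comul b)
      = LinearMap.mul' k H ((map (HopfAlgebra.antipode (R := k)) LinearMap.id)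
          (map (LinearMap.mul' k H) (LinearMap.mul' k H)
            ((tensorTensorTensorComm k H H H H)
              (Coalgebra.comul a ⊗ₜ[k] Coalgebra.comul b)))) := by
    simp only [LinearMap.comp_apply, LinearEquiv.coe_coe]
    congr 1
    rw [show map (F0 k H) (LinearMap.mul' k H)
        = map (HopfAlgebra.antipode (R := k)) LinearMap.id ∘ₗ
          map (LinearMap.mul' k H) (LinearMap.mul' k H) by
      rw [← TensorProduct.map_comp, LinearMap.id_comp]; rfl]
    rfl
  rw [this, mulmul_ttc, ← Bialgebra.comul_mul]
  have h2 := HopfAlgebra.mul_antipode_rTensor_comul_apply (R := k) (a * b)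
  rw [show (LinearMap.rTensor H (HopfAlgebra.antipode (R := k) (A := H)))
      = map (HopfAlgebra.antipode (R := k)) LinearMap.id from rfl] at h2
  rw [h2]
  simp

/-- `tri ((x ⊗ y) ⊗ w) = x * w * y`. -/
noncomputable def tri : (H ⊗[k] H) ⊗[k] H →ₗ[k] H :=
  LinearMap.mul' k H ∘ₗ LinearMap.rTensor H (LinearMap.mul' k H) ∘ₗ
    (TensorProduct.assoc k H H H).symm.toLinearMap ∘ₗ
    LinearMap.lTensor H (TensorProduct.comm k H H).toLinearMap ∘ₗ
    (TensorProduct.assoc k H H H).toLinearMap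

@[simp] lemma tri_tmul (x y w : H) :
    tri k H ((x ⊗ₜ[k] y) ⊗ₜ[k] w) = x * w * y := by
  simp [tri, mul_assoc]

lemma tri_one (y : H ⊗[k] H) : tri k H (y ⊗ₜ[k] (1 : H)) = LinearMap.mul' k H y := by
  induction y using TensorProduct.induction_on with
  | zero => simp
  | tmul p q => simp
  | add y1 y2 h1 h2 => simp only [add_tmul, map_add, h1, h2]

lemma conv_mul_G0 : conv k H (LinearMap.mul' k H) (G0 k H) = uE k H := by
  apply TensorProduct.ext'
  intro a b
  rw [conv_tmul]
  have key : LinearMap.mul' k H ∘ₗ map (LinearMap.mul' k H) (G0 k H) ∘ₗ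
        (tensorTensorTensorComm k H H H H).toLinearMap =
      tri k H ∘ₗ map (LinearMap.lTensor H (HopfAlgebra.antipode (R := k)))
        (LinearMap.mul' k H ∘ₗ LinearMap.lTensor H (HopfAlgebra.antipode (R := k))) := by
    apply TensorProduct.ext_fourfold'
    intro p q r s
    simp [tensorTensorTensorComm_tmul, mul_assoc]
  rw [key]
  simp only [LinearMap.comp_apply, map_tmul]
  have h2 := HopfAlgebra.mul_antipode_lTensor_comul_apply (R := k) b
  rw [h2, Algebra.algebraMap_eq_smul_one, tmul_smul, map_smul, tri_one,
    HopfAlgebra.mul_antipode_lTensor_comul_apply]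
  rw [uE_tmul, map_mul, Algebra.smul_def, Algebra.commutes]

lemma antipode_mul_antidistrib (a b : H) :
    HopfAlgebra.antipode (R := k) (a * b) =
      HopfAlgebra.antipode (R := k) b * HopfAlgebra.antipode (R := k) a := by
  have hFG : F0 k H = G0 k H := by
    calc F0 k H = conv k H (F0 k H) (uE k H) := (conv_unit_right _).symm
      _ = conv k H (F0 k H) (conv k H (LinearMap.mul' k H) (G0 k H)) := by
          rw [conv_mul_G0]
      _ = conv k H (conv k H (F0 k H) (LinearMap.mul' k H)) (G0 k H) := by
          rw [conv_assoc]
      _ = conv k H (uE k H) (G0 k H) := by rw [conv_F0_mul]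
      _ = G0 k H := conv_unit_left _
  have := LinearMap.congr_fun hFG (a ⊗ₜ[k] b)
  simpa using this

lemma antipode_one' : HopfAlgebra.antipode (R := k) (1 : H) = 1 := by
  have h := HopfAlgebra.mul_antipode_rTensor_comul_apply (R := k) (1 : H)
  rw [Bialgebra.comul_one, Algebra.TensorProduct.one_def] at h
  simpa using h

end DrinfeldAux
end AuxConv

section MainAux
variable (k H : Type*) [CommRing k] [Ring H] [HopfAlgebra k H]
namespace DrinfeldAux

/-- `Fmap (a ⊗ b) = S b * a`; note `drinfeldU k H R = Fmap R`. -/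
noncomputable def Fmap : H ⊗[k] H →ₗ[k] H :=
  LinearMap.mul' k H ∘ₗ map (HopfAlgebra.antipode (R := k)) LinearMap.id ∘ₗ
    (TensorProduct.comm k H H).toLinearMap

@[simp] lemma Fmap_tmul (a b : H) :
    Fmap k H (a ⊗ₜ[k] b) = HopfAlgebra.antipode (R := k) b * a := by simp [Fmap]

variable {k H}

lemma Fmap_mul_tmul (w : H ⊗[k] H) (x y : H) :
    Fmap k H (w * (x ⊗ₜ[k] y)) =
      HopfAlgebra.antipode (R := k) y * Fmap k H w * x := by
  induction w using TensorProduct.induction_on with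
  | zero => simp
  | tmul a b =>
    rw [Algebra.TensorProduct.tmul_mul_tmul, Fmap_tmul, Fmap_tmul,
      antipode_mul_antidistrib]
    simp only [mul_assoc]
  | add w1 w2 h1 h2 => simp only [add_mul, map_add, mul_add, h1, h2]

lemma Fmap_comm_mul (y : H ⊗[k] H) (a b : H) :
    Fmap k H ((TensorProduct.comm k H H y) * (a ⊗ₜ[k] b)) =
      HopfAlgebra.antipode (R := k) b *
        LinearMap.mul' k H (map (HopfAlgebra.antipode (R := k)) LinearMap.id y) * a := by
  induction y using TensorProduct.induction_on with
  | zero => simp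
  | tmul p q =>
    rw [TensorProduct.comm_tmul, Algebra.TensorProduct.tmul_mul_tmul, Fmap_tmul,
      antipode_mul_antidistrib, map_tmul, LinearMap.mul'_apply]
    simp only [LinearMap.id_coe, id_eq]
    simp only [mul_assoc]
  | add y1 y2 h1 h2 => simp only [map_add, add_mul, mul_add, h1, h2]

lemma Fmap_commDelta_mul (x : H) (w : H ⊗[k] H) :
    Fmap k H ((TensorProduct.comm k H H (Coalgebra.comul x)) * w) =
      Coalgebra.counit (R := k) x • Fmap k H w := by
  induction w using TensorProduct.induction_on with
  | zero => simp
  | tmul a b =>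
    rw [Fmap_comm_mul]
    rw [show LinearMap.mul' k H (map (HopfAlgebra.antipode (R := k)) LinearMap.id
        (Coalgebra.comul x))
      = algebraMap k H (Coalgebra.counit x) from
        HopfAlgebra.mul_antipode_rTensor_comul_apply (R := k) x]
    rw [Fmap_tmul, ← Algebra.commutes, mul_assoc, ← Algebra.smul_def]
  | add w1 w2 h1 h2 => rw [mul_add, map_add, h1, h2, map_add, smul_add]

end DrinfeldAux
end MainAux

namespace DrinfeldAux
section MainSec
variable {k H : Type*} [CommRing k] [Ring H] [HopfAlgebra k H] (R : H ⊗[k] H)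

/-- `Jmap R (p ⊗ q) = S q * (u * p)` where `u = Fmap R`. -/
noncomputable def Jmap : H ⊗[k] H →ₗ[k] H :=
  LinearMap.mul' k H ∘ₗ map (HopfAlgebra.antipode (R := k))
    (LinearMap.mulLeft k (Fmap k H R)) ∘ₗ (TensorProduct.comm k H H).toLinearMap

@[simp] lemma Jmap_tmul (p q : H) :
    Jmap R (p ⊗ₜ[k] q) =
      HopfAlgebra.antipode (R := k) q * (Fmap k H R * p) := by simp [Jmap]

lemma Fmap_R_mul (w : H ⊗[k] H) : Fmap k H (R * w) = Jmap R w := by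
  induction w using TensorProduct.induction_on with
  | zero => simp
  | tmul p q => rw [Fmap_mul_tmul, Jmap_tmul, mul_assoc]
  | add w1 w2 h1 h2 => rw [mul_add, map_add, h1, h2, map_add]

/-- `inner (b ⊗ c) = S (S c) * S b`. -/
noncomputable def innerW : H ⊗[k] H →ₗ[k] H :=
  LinearMap.mul' k H ∘ₗ map (HopfAlgebra.antipode (R := k) ∘ₗ HopfAlgebra.antipode (R := k))
    (HopfAlgebra.antipode (R := k)) ∘ₗ (TensorProduct.comm k H H).toLinearMap

@[simp] lemma innerW_tmul (b c : H) :
    innerW (k := k) (H := H) (b ⊗ₜ[k] c) =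
      HopfAlgebra.antipode (R := k) (HopfAlgebra.antipode (R := k) c) *
        HopfAlgebra.antipode (R := k) b := by simp [innerW]

lemma innerW_eq (y : H ⊗[k] H) :
    innerW (k := k) (H := H) y =
      HopfAlgebra.antipode (R := k)
        (LinearMap.mul' k H (LinearMap.lTensor H (HopfAlgebra.antipode (R := k)) y)) := by
  induction y using TensorProduct.induction_on with
  | zero => simp
  | tmul b c => simp [antipode_mul_antidistrib]
  | add y1 y2 h1 h2 => rw [map_add, h1, h2, map_add, map_add, map_add]

lemma innerW_comul (d : H) :
    innerW (k := k) (H := H) (Coalgebra.comul d) = algebraMap k H (Coalgebra.counit d) := by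
  rw [innerW_eq, HopfAlgebra.mul_antipode_lTensor_comul_apply,
    Algebra.algebraMap_eq_smul_one, map_smul, antipode_one']

/-- `Wmap (a ⊗ y) = innerW y * (u * a)`. -/
noncomputable def Wmap : H ⊗[k] (H ⊗[k] H) →ₗ[k] H :=
  LinearMap.mul' k H ∘ₗ map (innerW (k := k) (H := H))
    (LinearMap.mulLeft k (Fmap k H R)) ∘ₗ (TensorProduct.comm k H (H ⊗[k] H)).toLinearMap

@[simp] lemma Wmap_tmul (a : H) (y : H ⊗[k] H) :
    Wmap R (a ⊗ₜ[k] y) = innerW (k := k) (H := H) y * (Fmap k H R * a) := by simp [Wmap]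

end MainSec
end DrinfeldAux

namespace DrinfeldAux
section FinalSec
variable {k H : Type*} [CommRing k] [Ring H] [HopfAlgebra k H] (R : H ⊗[k] H)

lemma Wmap_assoc (y : H ⊗[k] H) (c : H) :
    Wmap R ((TensorProduct.assoc k H H H) (y ⊗ₜ[k] c)) =
      HopfAlgebra.antipode (R := k) (HopfAlgebra.antipode (R := k) c) * Jmap R y := by
  induction y using TensorProduct.induction_on with
  | zero => simp
  | tmul p q =>
    rw [TensorProduct.assoc_tmul, Wmap_tmul, innerW_tmul, Jmap_tmul]
    simp only [mul_assoc]
  | add y1 y2 h1 h2 => simp only [add_tmul, map_add, mul_add, h1, h2]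

lemma claimA (x : H) :
    Wmap R (LinearMap.lTensor H (Coalgebra.comul (R := k)) (Coalgebra.comul x)) =
      Fmap k H R * x := by
  have hg : Wmap R ∘ₗ LinearMap.lTensor H (Coalgebra.comul (R := k)) =
      LinearMap.mulLeft k (Fmap k H R) ∘ₗ (TensorProduct.rid k H).toLinearMap ∘ₗ
        LinearMap.lTensor H (Coalgebra.counit (R := k)) := by
    apply TensorProduct.ext'
    intro a d
    simp only [LinearMap.comp_apply, LinearMap.lTensor_tmul, Wmap_tmul,
      innerW_comul, LinearEquiv.coe_coe, TensorProduct.rid_tmul,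
      LinearMap.mulLeft_apply]
    rw [mul_smul_comm, Algebra.smul_def]
  have := LinearMap.congr_fun hg (Coalgebra.comul x)
  simp only [LinearMap.comp_apply] at this
  rw [this, Coalgebra.lTensor_counit_comul]
  simp

lemma claimB
    (hcom : ∀ x : H, R * Coalgebra.comul x =
      TensorProduct.comm k H H (Coalgebra.comul x) * R) (x : H) :
    Wmap R ((TensorProduct.assoc k H H H)
        (LinearMap.rTensor H (Coalgebra.comul (R := k)) (Coalgebra.comul x))) =
      HopfAlgebra.antipode (R := k) (HopfAlgebra.antipode (R := k) x) * Fmap k H R := by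
  have hKx : ∀ a : H, Jmap R (Coalgebra.comul a) =
      Coalgebra.counit (R := k) a • Fmap k H R := by
    intro a
    rw [← Fmap_R_mul, hcom a, Fmap_commDelta_mul]
  have hg2 : Wmap R ∘ₗ (TensorProduct.assoc k H H H).toLinearMap ∘ₗ
        LinearMap.rTensor H (Coalgebra.comul (R := k)) =
      LinearMap.mulRight k (Fmap k H R) ∘ₗ HopfAlgebra.antipode (R := k) ∘ₗ
        HopfAlgebra.antipode (R := k) ∘ₗ (TensorProduct.lid k H).toLinearMap ∘ₗ
        LinearMap.rTensor H (Coalgebra.counit (R := k)) := by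
    apply TensorProduct.ext'
    intro a c
    simp only [LinearMap.comp_apply, LinearMap.rTensor_tmul, LinearEquiv.coe_coe]
    rw [Wmap_assoc, hKx, TensorProduct.lid_tmul, map_smul, map_smul,
      LinearMap.mulRight_apply, mul_smul_comm, smul_mul_assoc]
  have := LinearMap.congr_fun hg2 (Coalgebra.comul x)
  simp only [LinearMap.comp_apply] at this
  rw [Coalgebra.rTensor_counit_comul] at this
  simp only [LinearEquiv.coe_coe, TensorProduct.lid_tmul, one_smul,
    LinearMap.mulRight_apply] at this
  exact this

lemma main_identity
    (hcom : ∀ x : H, R * Coalgebra.comul x =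
      TensorProduct.comm k H H (Coalgebra.comul x) * R) (x : H) :
    Fmap k H R * x =
      HopfAlgebra.antipode (R := k) (HopfAlgebra.antipode (R := k) x) * Fmap k H R := by
  calc Fmap k H R * x
      = Wmap R (LinearMap.lTensor H (Coalgebra.comul (R := k)) (Coalgebra.comul x)) :=
        (claimA R x).symm
    _ = Wmap R ((TensorProduct.assoc k H H H)
          (LinearMap.rTensor H (Coalgebra.comul (R := k)) (Coalgebra.comul x))) := by
        rw [Coalgebra.coassoc_apply]
    _ = HopfAlgebra.antipode (R := k) (HopfAlgebra.antipode (R := k) x) * Fmap k H R :=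
        claimB R hcom x

end FinalSec
end DrinfeldAux

/-- For a quasi-triangular structure `R` on a Hopf algebra `H` with antipode `S`, the
element `u = μ((S ⊗ id)(τ(R)))` satisfies `u·x = S(S(x))·u` for every `x ∈ H`; in
particular, whenever `u` is invertible (with two-sided inverse `v`), the square of the
antipode is the inner automorphism `S²(x) = u·x·u⁻¹`. -/
theorem drinfeldU_conjugates_antipode_sq (R : H ⊗[k] H) (hR : IsUnit R)
    (h1 : ∀ x : H, R * Bialgebra.comulAlgHom k H x =
      (Algebra.TensorProduct.comm k H H) (Bialgebra.comulAlgHom k H x) * R)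
    (h2 : comulTensorId k H R = phi13 k H R * phi23 k H R)
    (h3 : idTensorComul k H R = phi13 k H R * phi12 k H R) :
    (∀ x : H, drinfeldU k H R * x =
        HopfAlgebra.antipode (R := k) (HopfAlgebra.antipode (R := k) x) * drinfeldU k H R) ∧
    (∀ v : H, drinfeldU k H R * v = 1 → v * drinfeldU k H R = 1 →
      ∀ x : H, HopfAlgebra.antipode (R := k) (HopfAlgebra.antipode (R := k) x) =
        drinfeldU k H R * x * v) := by
  have hu : drinfeldU k H R = DrinfeldAux.Fmap k H R := rfl
  have hcom : ∀ x : H, R * Coalgebra.comul x =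
      TensorProduct.comm k H H (Coalgebra.comul x) * R := fun x => h1 x
  have main : ∀ x : H, drinfeldU k H R * x =
      HopfAlgebra.antipode (R := k) (HopfAlgebra.antipode (R := k) x) * drinfeldU k H R := by
    intro x
    rw [hu]
    exact DrinfeldAux.main_identity R hcom x
  refine ⟨main, ?_⟩
  intro v hv1 hv2 x
  calc HopfAlgebra.antipode (R := k) (HopfAlgebra.antipode (R := k) x)
      = HopfAlgebra.antipode (R := k) (HopfAlgebra.antipode (R := k) x) *
          (drinfeldU k H R * v) := by rw [hv1, mul_one]
    _ = (HopfAlgebra.antipode (R := k) (HopfAlgebra.antipode (R := k) x) *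
          drinfeldU k H R) * v := by rw [mul_assoc]
    _ = drinfeldU k H R * x * v := by rw [← main x]

end DrinfeldAuxAll
end

section
/- Let He_n denote the probabilists' Hermite polynomial of order n (defined by He_0 = 1 and He_{n+1} = X·He_n − He_n′), and define φ_n : ℝ → ℝ by φ_n(x) = He_n(√2·x)·exp(−x²/2). Then φ_n is an eigenfunction of the quantum harmonic-oscillator Hamiltonian H = (1/2)·(−d²/dx² + x²) with eigenvalue E_n = n + 1/2: for every x ∈ ℝ, −(1/2)·φ_n″(x) + (1/2)·x²·φ_n(x) = (n + 1/2)·φ_n(x). -/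
/-- The unnormalized `n`-th harmonic-oscillator eigenfunction
`φ_n(x) = He_n(√2·x)·exp(−x²/2)`, where `He_n` is the probabilists' Hermite
polynomial of order `n`. -/
noncomputable def oscillatorEigenfunction (n : ℕ) (x : ℝ) : ℝ :=
  (Polynomial.aeval (Real.sqrt 2 * x) (Polynomial.hermite n)) * Real.exp (-(x ^ 2) / 2)

open Polynomial Real

lemma derivative_hermite_succ' (n : ℕ) :
    derivative (hermite (n + 1)) = (n + 1 : ℕ) • hermite n := by
  induction n with
  | zero => simp [hermite_succ, hermite_zero]
  | succ n ih =>
    rw [hermite_succ (n+1), derivative_sub, derivative_mul, derivative_X, ih, derivative_smul,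
      one_mul, mul_smul_comm, add_sub_assoc, ← smul_sub, ← hermite_succ n, succ_nsmul]
    rw [add_smul, one_smul, succ_nsmul]; abel

-- Hermite ODE: He_n'' + n He_n = X He_n'
lemma hermite_ode (n : ℕ) :
    derivative (derivative (hermite n)) + (n : ℕ) • hermite n = X * derivative (hermite n) := by
  have h := derivative_hermite_succ' n
  rw [hermite_succ n, derivative_sub, derivative_mul, derivative_X, one_mul] at h
  have := congrArg (fun q => q + derivative (derivative (hermite n)) - hermite n) h
  rw [succ_nsmul] at this
  linear_combination -this

noncomputable def psiAux (q : Polynomial ℤ) (x : ℝ) : ℝ :=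
  (aeval (Real.sqrt 2 * x) q) * Real.exp (-(x ^ 2) / 2)

lemma hasDerivAt_psiAux (q : Polynomial ℤ) (x : ℝ) :
    HasDerivAt (psiAux q)
      (Real.sqrt 2 * psiAux (derivative q) x - x * psiAux q x) x := by
  have hlin : HasDerivAt (fun y : ℝ => Real.sqrt 2 * y) (Real.sqrt 2) x := by
    simpa using (hasDerivAt_id x).const_mul (Real.sqrt 2)
  have hP : HasDerivAt (fun x : ℝ => (aeval (Real.sqrt 2 * x) q : ℝ))
      (aeval (Real.sqrt 2 * x) (derivative q) * Real.sqrt 2) x :=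
    HasDerivAt.comp x (Polynomial.hasDerivAt_aeval (q := q) (Real.sqrt 2 * x))
      hlin
  have hE : HasDerivAt (fun x : ℝ => Real.exp (-(x ^ 2) / 2))
      (Real.exp (-(x ^ 2) / 2) * (-(2 * x ^ 1) / 2)) x :=
    (((hasDerivAt_pow 2 x).neg).div_const 2).exp
  have : HasDerivAt (psiAux q) _ x := hP.mul hE
  convert this using 1
  simp [psiAux]
  ring

lemma deriv_psiAux (q : Polynomial ℤ) :
    deriv (psiAux q) = fun x =>
      Real.sqrt 2 * psiAux (derivative q) x - x * psiAux q x := by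
  funext x
  exact (hasDerivAt_psiAux q x).deriv

lemma deriv2_psiAux (q : Polynomial ℤ) (x : ℝ) :
    deriv (deriv (psiAux q)) x =
      2 * psiAux (derivative (derivative q)) x
        - 2 * Real.sqrt 2 * x * psiAux (derivative q) x
        + (x ^ 2 - 1) * psiAux q x := by
  rw [deriv_psiAux]
  have h1 : HasDerivAt (fun x => Real.sqrt 2 * psiAux (derivative q) x - x * psiAux q x)
      (Real.sqrt 2 * (Real.sqrt 2 * psiAux (derivative (derivative q)) x
          - x * psiAux (derivative q) x)
        - (1 * psiAux q x + x * (Real.sqrt 2 * psiAux (derivative q) x - x * psiAux q x))) x :=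
    ((hasDerivAt_psiAux (derivative q) x).const_mul (Real.sqrt 2)).sub
      ((hasDerivAt_id x).mul (hasDerivAt_psiAux q x))
  rw [h1.deriv]
  have h2' : Real.sqrt 2 ^ 2 = 2 := Real.sq_sqrt (by norm_num)
  ring_nf
  rw [h2']; ring

/-- **Eigenvalues of the quantum harmonic oscillator.**
With `φ_n(x) = He_n(√2·x)·exp(−x²/2)` (`He_n` the probabilists' Hermite polynomial),
`φ_n` is an eigenfunction of the Hamiltonian `H = (1/2)·(−d²/dx² + x²)` with
eigenvalue `E_n = n + 1/2`: for every `x ∈ ℝ`,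
`−(1/2)·φ_n″(x) + (1/2)·x²·φ_n(x) = (n + 1/2)·φ_n(x)`. -/
theorem harmonic_oscillator_eigenvalue (n : ℕ) (x : ℝ) :
    -(1 / 2 : ℝ) * deriv (deriv (oscillatorEigenfunction n)) x +
      (1 / 2 : ℝ) * x ^ 2 * oscillatorEigenfunction n x =
    ((n : ℝ) + 1 / 2) * oscillatorEigenfunction n x := by
  have hφ : oscillatorEigenfunction n = psiAux (hermite n) := rfl
  have hode : psiAux (derivative (derivative (hermite n))) x
      = Real.sqrt 2 * x * psiAux (derivative (hermite n)) x - n * psiAux (hermite n) x := by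
    have h := congrArg (fun q => (aeval (Real.sqrt 2 * x) q : ℝ)) (hermite_ode n)
    simp only [map_add, map_nsmul, nsmul_eq_mul, map_mul, aeval_X, map_natCast] at h
    unfold psiAux
    linear_combination Real.exp (-(x ^ 2) / 2) * h
  rw [hφ, deriv2_psiAux, hode]
  ring
end
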